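/- arXiv:2402.13672 — 8 statements merged into one kernel-verified Lean document; each statement's English description precedes it below -/
import Mathlib

section
/- If p^k = r^l + 1 where p and r are prime numbers and k, l > 1, then p^k = 9 and r^l = 8. -/
open Finset

/-- An odd integer dividing a power of two is `±1`. -/
lemma aux_odd_dvd_two_pow {T : ℤ} {n : ℕ} (hodd : Odd T) (hdvd : T ∣ 2 ^ n) :
    T.natAbs = 1 := by
  have h1 : T.natAbs ∣ 2 ^ n := by
    have h := Int.natAbs_dvd_natAbs.mpr hdvd
    have h2 : ((2 : ℤ) ^ n).natAbs = 2 ^ n := by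
      rw [Int.natAbs_pow]; rfl
    rwa [h2] at h
  have h2 : ¬ (2 ∣ T.natAbs) := by
    have := Int.natAbs_odd.mpr hodd
    rcases this with ⟨t, ht⟩; omega
  have hcop : Nat.Coprime 2 T.natAbs := (Nat.prime_two.coprime_iff_not_dvd).mpr h2
  exact Nat.Coprime.eq_one_of_dvd ((hcop.pow_left n).symm) h1

lemma aux_natCast_odd_zmod_two {n : ℕ} (hn : Odd n) : ((n : ZMod 2)) = 1 := by
  rw [← ZMod.natCast_mod, Nat.odd_iff.mp hn, Nat.cast_one]

/-- Case r = 2: p odd prime, p^k = 2^l + 1 -/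
lemma aux_case_r2 (p k l : ℕ) (hp : p.Prime) (hpodd : Odd p)
    (hk : 1 < k) (hl : 1 < l) (h : p ^ k = 2 ^ l + 1) :
    p ^ k = 9 ∧ 2 ^ l = 8 := by
  have hz : ((p : ℤ)) ^ k - 1 = 2 ^ l := by
    have := congrArg (fun n : ℕ => (n : ℤ)) h
    push_cast at this
    linarith
  have hkeven : Even k := by
    by_contra hko
    have hkodd : Odd k := Nat.not_even_iff_odd.mp hko
    set S : ℤ := ∑ i ∈ range k, (p : ℤ) ^ i with hS
    have hgs : S * ((p : ℤ) - 1) = 2 ^ l := by rw [hS, geom_sum_mul, hz]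
    have hSodd : Odd S := by
      have hnd : ¬ ((((2:ℕ)) : ℤ) ∣ S) := by
        rw [← ZMod.intCast_zmod_eq_zero_iff_dvd, hS]
        push_cast
        rw [aux_natCast_odd_zmod_two hpodd]
        simp only [one_pow, Finset.sum_const, Finset.card_range, nsmul_eq_mul, mul_one]
        rw [aux_natCast_odd_zmod_two hkodd]
        exact one_ne_zero
      exact Int.odd_iff.mpr (by push_cast at hnd; omega)
    have hSdvd : S ∣ 2 ^ l := ⟨(p : ℤ) - 1, hgs.symm⟩
    have hS1 : S.natAbs = 1 := aux_odd_dvd_two_pow hSodd hSdvd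
    rcases Int.natAbs_eq_iff.mp hS1 with hSe | hSe <;> rw [hSe] at hgs
    · -- S = 1 : then p - 1 = 2^l, so p = p^k, k = 1
      have hpeq : (p : ℤ) = (p : ℤ) ^ k := by push_cast at hgs; linarith
      have hpk : p = p ^ k := by exact_mod_cast hpeq
      have : p ^ 1 < p ^ k := Nat.pow_lt_pow_right hp.one_lt hk
      rw [pow_one] at this
      omega
    · -- S = -1 : then -(p-1) = 2^l, impossible
      have hp2 : 2 ≤ p := hp.two_le
      have h2 : ((p : ℤ)) - 1 ≥ 1 := by
        have : (2:ℤ) ≤ (p:ℤ) := by exact_mod_cast hp2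
        linarith
      push_cast at hgs
      nlinarith [pow_pos (by norm_num : (0:ℤ) < 2) l]
  obtain ⟨m, hm⟩ := hkeven
  have hm1 : 1 ≤ m := by omega
  rw [hm, pow_add] at h
  obtain ⟨t, ht⟩ : ∃ t, p ^ m = t + 1 := ⟨p ^ m - 1, by
    have := Nat.one_le_pow m p hp.pos; omega⟩
  have hkey : (p ^ m - 1) * (p ^ m + 1) = 2 ^ l := by
    rw [ht] at h ⊢
    simp only [Nat.add_sub_cancel]
    nlinarith [h]
  have hdvd1 : p ^ m - 1 ∣ 2 ^ l := ⟨_, hkey.symm⟩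
  have hdvd2 : p ^ m + 1 ∣ 2 ^ l := Dvd.intro_left _ hkey
  obtain ⟨a, ha, hae⟩ := (Nat.dvd_prime_pow Nat.prime_two).mp hdvd1
  obtain ⟨b, hb, hbe⟩ := (Nat.dvd_prime_pow Nat.prime_two).mp hdvd2
  have hpm : 3 ≤ p ^ m := by
    have h3 : 3 ≤ p := by
      rcases hpodd with ⟨s, hs⟩
      have := hp.two_le; omega
    calc 3 ≤ p := h3
    _ = p ^ 1 := (pow_one p).symm
    _ ≤ p ^ m := Nat.pow_le_pow_right (by omega) hm1
  have hdiff : 2 ^ a + 2 = 2 ^ b := by omega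
  have ha1 : a ≤ 1 := by
    by_contra hc
    have h4a : 4 ∣ 2 ^ a := by
      have : 2 ^ 2 ∣ 2 ^ a := Nat.pow_dvd_pow 2 (by omega)
      simpa using this
    have hb2 : 2 ≤ b := by
      have : 4 ≤ 2 ^ b := by omega
      by_contra hbc
      interval_cases b <;> omega
    have h4b : 4 ∣ 2 ^ b := by
      have : 2 ^ 2 ∣ 2 ^ b := Nat.pow_dvd_pow 2 hb2
      simpa using this
    omega
  interval_cases a
  · -- p ^ m - 1 = 1, p^m = 2 < 3
    omega
  · -- p ^ m - 1 = 2, p^m = 3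
    have hpm3 : p ^ m = 3 := by omega
    have hp3 : p = 3 := by
      have hpd : p ∣ 3 := hpm3 ▸ dvd_pow_self p (by omega)
      rcases (Nat.Prime.eq_one_or_self_of_dvd (by norm_num) p hpd) with h' | h'
      · exact absurd h' hp.one_lt.ne'
      · exact h'
    subst hp3
    have hm1' : m = 1 := by
      by_contra hmc
      have : 3 ^ 2 ≤ 3 ^ m := Nat.pow_le_pow_right (by omega) (by omega)
      omega
    subst hm1'
    constructor
    · rw [hm]; norm_num
    · norm_num at h; omega


/-- Case p = 2 is impossible. -/
lemma aux_case_p2 (r k l : ℕ) (hr : r.Prime) (hrodd : Odd r)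
    (hk : 1 < k) (hl : 1 < l) (h : 2 ^ k = r ^ l + 1) : False := by
  have hr3 : 3 ≤ r := by rcases hrodd with ⟨t, ht⟩; have := hr.two_le; omega
  have hlodd : Odd l := by
    by_contra hle
    have hev : Even l := Nat.not_odd_iff_even.mp hle
    obtain ⟨m, hm⟩ := hev
    have h4 : (4 : ℕ) ∣ 2 ^ k := by
      have : 2 ^ 2 ∣ 2 ^ k := Nat.pow_dvd_pow 2 (by omega)
      simpa using this
    have hsq : r ^ l = (r ^ m) * (r ^ m) := by rw [hm, pow_add]
    obtain ⟨t, ht⟩ := hrodd.pow (n := m)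
    have : (r ^ m) * (r ^ m) = 4 * (t * t + t) + 1 := by rw [ht]; ring
    omega
  set T : ℤ := ∑ i ∈ range l, (-(r : ℤ)) ^ i with hT
  have h3 : ((r : ℤ)) ^ l + 1 = 2 ^ k := by
    have := congrArg (fun n : ℕ => (n : ℤ)) h
    push_cast at this
    linarith
  have hgs : T * ((r : ℤ) + 1) = 2 ^ k := by
    have h1 : T * ((-(r : ℤ)) - 1) = (-(r : ℤ)) ^ l - 1 := geom_sum_mul _ _
    have h2 : (-(r : ℤ)) ^ l = -((r : ℤ) ^ l) := Odd.neg_pow hlodd _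
    nlinarith [h1, h2, h3]
  have hTodd : Odd T := by
    have hnd : ¬ ((((2:ℕ)) : ℤ) ∣ T) := by
      rw [← ZMod.intCast_zmod_eq_zero_iff_dvd, hT]
      push_cast
      have hr2 : (-((r : ℤ) : ZMod 2)) = 1 := by
        push_cast
        rw [aux_natCast_odd_zmod_two hrodd]
        decide
      push_cast at hr2
      rw [hr2]
      simp only [one_pow, Finset.sum_const, Finset.card_range, nsmul_eq_mul, mul_one]
      rw [aux_natCast_odd_zmod_two hlodd]
      exact one_ne_zero
    exact Int.odd_iff.mpr (by push_cast at hnd; omega)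
  have hTdvd : T ∣ 2 ^ k := ⟨(r : ℤ) + 1, hgs.symm⟩
  have hT1 : T.natAbs = 1 := aux_odd_dvd_two_pow hTodd hTdvd
  rcases Int.natAbs_eq_iff.mp hT1 with hTe | hTe <;> rw [hTe] at hgs
  · -- T = 1 : r + 1 = 2^k = r^l + 1, so r = r^l, l = 1
    have hre' : (r : ℤ) = (r : ℤ) ^ l := by push_cast at hgs; linarith
    have hre : r = r ^ l := by exact_mod_cast hre'
    have : r ^ 1 < r ^ l := Nat.pow_lt_pow_right hr.one_lt hl
    rw [pow_one] at this
    omega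
  · -- T = -1 : negative = positive power, contradiction
    have hpos : (0:ℤ) ≤ ((r : ℤ)) := by positivity
    push_cast at hgs
    nlinarith [pow_pos (by norm_num : (0:ℤ) < 2) k]

theorem stmt_0 (p r k l : ℕ) (hp : p.Prime) (hr : r.Prime)
    (hk : 1 < k) (hl : 1 < l) (h : p ^ k = r ^ l + 1) :
    p ^ k = 9 ∧ r ^ l = 8 := by
  rcases hp.eq_two_or_odd' with hp2 | hpodd
  · rcases hr.eq_two_or_odd' with hr2 | hrodd
    · subst hp2; subst hr2
      exfalso
      have h1 : 2 ∣ 2 ^ k := dvd_pow_self 2 (by omega)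
      have h2 : 2 ∣ 2 ^ l := dvd_pow_self 2 (by omega)
      omega
    · exact absurd (aux_case_p2 r k l hr hrodd hk hl (hp2 ▸ h)) not_false
  · rcases hr.eq_two_or_odd' with hr2 | hrodd
    · subst hr2
      exact aux_case_r2 p k l hp hpodd hk hl h
    · exfalso
      have h1 : Odd (p ^ k) := hpodd.pow
      have h2 : Odd (r ^ l) := hrodd.pow
      rcases h1 with ⟨a, ha⟩; rcases h2 with ⟨b, hb⟩
      omega
end

section
/- If a finite group G acts transitively on a set Ω of cardinality p^k for a prime p, then every Sylow p-subgroup P of G also acts transitively on Ω. -/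
theorem stmt_1 {G : Type*} [Group G] [Finite G] {Ω : Type*} [Fintype Ω]
    [MulAction G Ω] [MulAction.IsPretransitive G Ω]
    (p k : ℕ) (hp : p.Prime) (hΩ : Fintype.card Ω = p ^ k)
    (P : Sylow p G) :
    MulAction.IsPretransitive P Ω := by
  haveI : Fact p.Prime := ⟨hp⟩
  have hΩne : Nonempty Ω := by
    rw [← Fintype.card_pos_iff, hΩ]; exact pow_pos hp.pos k
  obtain ⟨x⟩ := hΩne
  -- stabilizers
  set H := MulAction.stabilizer G x with hH
  have hstab : MulAction.stabilizer ((P : Subgroup G)) x = H.subgroupOf P := by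
    ext g; simp only [Subgroup.mem_subgroupOf, MulAction.mem_stabilizer_iff, hH]; exact Iff.rfl
  have hHindex : H.index = p ^ k := by
    rw [MulAction.index_stabilizer_of_transitive, Nat.card_eq_fintype_card, hΩ]
  -- orbit of P
  have horb : (MulAction.orbit ((P : Subgroup G)) x).ncard = (MulAction.stabilizer ((P : Subgroup G)) x).index :=
    (MulAction.index_stabilizer _ _).symm
  have hrel : (MulAction.stabilizer ((P : Subgroup G)) x).index = H.relIndex P := by
    rw [hstab]; rfl
  -- p^k ∣ relindex
  have h1 : (H ⊓ (P : Subgroup G)).index = H.relIndex P * (P : Subgroup G).index := by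
    rw [← Subgroup.inf_relIndex_right, Subgroup.relIndex_mul_index inf_le_right]
  have h2 : H.index ∣ (H ⊓ (P : Subgroup G)).index :=
    Subgroup.index_dvd_of_le inf_le_left
  have hdvd : p ^ k ∣ H.relIndex P * (P : Subgroup G).index := by
    rw [← h1, ← hHindex]; exact h2
  have hcop : Nat.Coprime (p ^ k) (P : Subgroup G).index :=
    Nat.Coprime.pow_left _ ((Nat.Prime.coprime_iff_not_dvd hp).2 P.not_dvd_index)
  have hdvd' : p ^ k ∣ (MulAction.orbit ((P : Subgroup G)) x).ncard := by
    rw [horb, hrel]; exact (Nat.Coprime.dvd_of_dvd_mul_right hcop hdvd)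
  -- orbit = univ
  have hle : (MulAction.orbit ((P : Subgroup G)) x).ncard ≤ p ^ k := by
    rw [← hΩ, ← Nat.card_eq_fintype_card, ← Set.ncard_univ]
    exact Set.ncard_le_ncard (Set.subset_univ _) Set.finite_univ
  have hpos : 0 < (MulAction.orbit ((P : Subgroup G)) x).ncard := by
    have : (MulAction.orbit ((P : Subgroup G)) x).Nonempty := ⟨x, MulAction.mem_orbit_self x⟩
    exact (Set.ncard_pos (Set.toFinite _)).2 this
  have hcard : (MulAction.orbit ((P : Subgroup G)) x).ncard = p ^ k :=
    Nat.le_antisymm hle (Nat.le_of_dvd hpos hdvd')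
  have huniv : MulAction.orbit ((P : Subgroup G)) x = Set.univ := by
    refine Set.eq_of_subset_of_ncard_le (Set.subset_univ _) ?_ Set.finite_univ
    rw [hcard, Set.ncard_univ, Nat.card_eq_fintype_card, hΩ]
  constructor
  intro y z
  have hy : y ∈ MulAction.orbit ((P : Subgroup G)) x := huniv ▸ Set.mem_univ y
  have hz : z ∈ MulAction.orbit ((P : Subgroup G)) x := huniv ▸ Set.mem_univ z
  obtain ⟨g, hg⟩ := hy
  obtain ⟨h, hh⟩ := hz
  exact ⟨h * g⁻¹, by rw [← hg, ← hh, mul_smul, inv_smul_smul]⟩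
end

section
/- Suppose q ≥ 2, d ≥ 2 are integers and (q^d - 1)/(q - 1) = p^k for a prime p and integer k ≥ 1. Then d is prime. -/
lemma geom_factor (q a b : ℕ) :
    (∑ i ∈ Finset.range a, q ^ i) * (∑ j ∈ Finset.range b, (q ^ a) ^ j)
      = ∑ i ∈ Finset.range (a * b), q ^ i := by
  induction b with
  | zero => simp
  | succ b ih =>
    rw [Finset.sum_range_succ, Nat.mul_succ, Finset.sum_range_add, ← ih, Nat.mul_add]
    congr 1
    rw [Finset.sum_mul]
    refine Finset.sum_congr rfl fun i _ => ?_
    rw [← pow_mul, ← pow_add, Nat.add_comm]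

lemma sq_zero_pow {R : Type*} [CommRing R] (x : R) (hx : x ^ 2 = 0) (j : ℕ) :
    (1 + x) ^ j = 1 + (j : R) * x := by
  induction j with
  | zero => simp
  | succ j ih =>
    rw [pow_succ, ih]
    have : (1 + (j : R) * x) * (1 + x) = 1 + ((j : R) + 1) * x + (j : R) * x ^ 2 := by ring
    rw [this, hx]
    push_cast
    ring

lemma sum_lb (q a : ℕ) (hq : 2 ≤ q) (ha : 2 ≤ a) :
    1 + q ≤ ∑ i ∈ Finset.range a, q ^ i := by
  calc 1 + q = ∑ i ∈ Finset.range 2, q ^ i := by simp [Finset.sum_range_succ]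
  _ ≤ ∑ i ∈ Finset.range a, q ^ i :=
    Finset.sum_le_sum_of_subset (Finset.range_subset_range.mpr ha)

lemma key (q p k a b : ℕ) (hq : 2 ≤ q) (hp : p.Prime)
    (h : ∑ i ∈ Finset.range (a * b), q ^ i = p ^ k) (ha : 2 ≤ a) (hb : 2 ≤ b) :
    (∃ s, 1 ≤ s ∧ (∑ j ∈ Finset.range b, (q ^ a) ^ j) = p ^ s) ∧ p ∣ q ^ a - 1 ∧ p ∣ b := by
  set S := ∑ i ∈ Finset.range a, q ^ i with hS
  set T := ∑ j ∈ Finset.range b, (q ^ a) ^ j with hT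
  have hfact : S * T = p ^ k := by rw [hS, hT, geom_factor]; exact h
  have hS1 : 1 < S := lt_of_lt_of_le (by omega) (sum_lb q a hq ha)
  have hqa : 2 ≤ q ^ a := le_trans hq (Nat.le_self_pow (by omega) q)
  have hT1 : 1 < T := lt_of_lt_of_le (by omega) (sum_lb (q ^ a) b hqa hb)
  -- S and T are powers of p
  have hSd : S ∣ p ^ k := by rw [← hfact]; exact dvd_mul_right S T
  have hTd : T ∣ p ^ k := by rw [← hfact]; exact dvd_mul_left T S
  obtain ⟨i, hik, hSi⟩ := (Nat.dvd_prime_pow hp).mp hSd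
  obtain ⟨s, hsk, hTs⟩ := (Nat.dvd_prime_pow hp).mp hTd
  have hi1 : 1 ≤ i := by
    rcases Nat.eq_zero_or_pos i with h0 | h1
    · rw [h0, pow_zero] at hSi; omega
    · exact h1
  have hs1 : 1 ≤ s := by
    rcases Nat.eq_zero_or_pos s with h0 | h1
    · rw [h0, pow_zero] at hTs; omega
    · exact h1
  have hpS : p ∣ S := hSi ▸ dvd_pow_self p (by omega)
  have hpT : p ∣ T := hTs ▸ dvd_pow_self p (by omega)
  -- q^a = 1 in ZMod p
  have hScast : (S : ZMod p) = 0 := (ZMod.natCast_eq_zero_iff _ _).mpr hpS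
  have hxa : (q : ZMod p) ^ a = 1 := by
    have := geom_sum_mul (q : ZMod p) a
    have hScast' : (∑ i ∈ Finset.range a, (q : ZMod p) ^ i) = 0 := by
      rw [hS] at hScast; push_cast at hScast; exact hScast
    rw [hScast', zero_mul] at this
    have := sub_eq_zero.mp this.symm
    exact this
  have hdvd1 : p ∣ q ^ a - 1 := by
    rw [← ZMod.natCast_eq_zero_iff]
    have h1 : (q ^ a - 1 : ℕ) + 1 = q ^ a := by omega
    have : ((q ^ a - 1 : ℕ) : ZMod p) + 1 = ((q ^ a : ℕ) : ZMod p) := by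
      rw [← h1]; push_cast; ring
    push_cast at this
    rw [hxa] at this
    linear_combination this
  refine ⟨⟨s, hs1, hTs⟩, hdvd1, ?_⟩
  -- T ≡ b mod p
  have hTcast : (T : ZMod p) = (b : ZMod p) := by
    rw [hT]; push_cast
    rw [Finset.sum_congr rfl fun j _ => by rw [hxa, one_pow]]
    simp
  have : (b : ZMod p) = 0 := by
    rw [← hTcast]
    exact (ZMod.natCast_eq_zero_iff _ _).mpr hpT
  exact (ZMod.natCast_eq_zero_iff _ _).mp this

theorem stmt_7 (q d p k : ℕ) (hq : 2 ≤ q) (hd : 2 ≤ d) (hp : p.Prime)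
    (hk : 1 ≤ k) (h : ∑ i ∈ Finset.range d, q ^ i = p ^ k) :
    d.Prime := by
  by_contra hdp
  -- every prime factor of d is p
  have hall : ∀ {r : ℕ}, r.Prime → r ∣ d → r = p := by
    intro r hr hrd
    obtain ⟨m, hm⟩ := hrd
    have hm2 : 2 ≤ m := by
      have hm0 : m ≠ 0 := by rintro rfl; omega
      have hm1 : m ≠ 1 := by
        rintro rfl
        rw [mul_one] at hm
        exact hdp (hm ▸ hr)
      omega
    have h' : ∑ i ∈ Finset.range (m * r), q ^ i = p ^ k := by rwa [mul_comm, ← hm]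
    obtain ⟨_, _, hpb⟩ := key q p k m r hq hp h' hm2 hr.two_le
    exact ((Nat.prime_dvd_prime_iff_eq hp hr).mp hpb).symm
  have hd0 : d ≠ 0 := by omega
  have hdpow := Nat.eq_prime_pow_of_unique_prime_dvd hd0 @hall
  set n := d.primeFactorsList.length with hn
  have hn2 : 2 ≤ n := by
    by_contra hn'
    interval_cases n
    · simp at hdpow; omega
    · rw [pow_one] at hdpow; exact hdp (hdpow ▸ hp)
  set a := p ^ (n - 1) with ha
  have hda : d = a * p := by
    rw [hdpow, ha, ← pow_succ]
    congr 1
    omega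
  have ha2 : 2 ≤ a := le_trans hp.two_le (Nat.le_self_pow (by omega) p)
  have h' : ∑ i ∈ Finset.range (a * p), q ^ i = p ^ k := by rwa [← hda]
  obtain ⟨⟨s, hs1, hTs⟩, hdvd1, -⟩ := key q p k a p hq hp h' ha2 hp.two_le
  set T := ∑ j ∈ Finset.range p, (q ^ a) ^ j with hT
  have hqa1 : 1 ≤ q ^ a := Nat.one_le_pow _ _ (by omega)
  obtain ⟨t, ht⟩ := hdvd1
  have hqat : q ^ a = p * t + 1 := by omega
  -- lower bound on T
  have hap : p ≤ a := by
    rw [ha]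
    calc p = p ^ 1 := (pow_one p).symm
    _ ≤ p ^ (n - 1) := Nat.pow_le_pow_right hp.pos (by omega)
  have hTlb : p < T := by
    have h1 : 1 + q ^ a ≤ T :=
      sum_lb (q ^ a) p (le_trans hq (Nat.le_self_pow (by omega) q)) hp.two_le
    have h2 : 2 ^ a ≤ q ^ a := Nat.pow_le_pow_left hq a
    have h3 : 2 ^ p ≤ 2 ^ a := Nat.pow_le_pow_right (by omega) hap
    have h4 : p < 2 ^ p := Nat.lt_two_pow_self
    omega
  -- not p^2 ∣ T
  have hnot : ¬ p ^ 2 ∣ T := by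
    have hTcast : (T : ZMod (p ^ 2)) = (p : ZMod (p ^ 2)) := by
      rw [hT]; push_cast
      have hx : ((q : ZMod (p ^ 2)) ^ a) = 1 + (p : ZMod (p ^ 2)) * t := by
        have : ((q ^ a : ℕ) : ZMod (p ^ 2)) = ((p * t + 1 : ℕ) : ZMod (p ^ 2)) := by
          rw [hqat]
        push_cast at this
        rw [this]; ring
      have hx2 : ((p : ZMod (p ^ 2)) * t) ^ 2 = 0 := by
        have hp2 : ((p ^ 2 : ℕ) : ZMod (p ^ 2)) = 0 := ZMod.natCast_self _
        push_cast at hp2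
        rw [mul_pow, hp2, zero_mul]
      rw [Finset.sum_congr rfl fun j _ => by rw [hx, sq_zero_pow _ hx2 j]]
      rw [Finset.sum_add_distrib]
      simp only [Finset.sum_const, Finset.card_range, smul_eq_mul, mul_one]
      rw [← Finset.sum_mul]
      have hsum : (∑ j ∈ Finset.range p, (j : ZMod (p ^ 2)))
          = ((∑ j ∈ Finset.range p, j : ℕ) : ZMod (p ^ 2)) := by push_cast; ring
      -- the correction term vanishes
      have hvanish : (∑ j ∈ Finset.range p, (j : ZMod (p ^ 2))) * ((p : ZMod (p ^ 2)) * t) = 0 := by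
        set m := ∑ j ∈ Finset.range p, j with hm
        have hm2 : m * 2 = p * (p - 1) := Finset.sum_range_id_mul_two p
        rcases hp.eq_two_or_odd' with hp2 | hodd
        · -- p = 2 : need 4 ∣ q^a - 1, i.e. 2 ∣ t
          subst hp2
          have hqodd : Odd q := by
            rcases Nat.even_or_odd q with he | ho
            · exfalso
              have : Even (q ^ a) := Nat.even_pow.mpr ⟨he, by omega⟩
              rw [hqat] at this
              rcases this with ⟨u, hu⟩
              omega
            · exact ho
          obtain ⟨c, hc⟩ : 2 ∣ a := ha ▸ dvd_pow_self 2 (by omega)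
          have hqc : Odd (q ^ c) := hqodd.pow
          obtain ⟨u, hu⟩ := hqc
          have hq4 : q ^ a = 4 * (u * u + u) + 1 := by
            rw [hc, Nat.mul_comm 2 c, pow_mul, hu]; ring
          have h2t : 2 ∣ t := by omega
          obtain ⟨t', ht'⟩ := h2t
          rw [hsum]
          have hcast : ((m * (2 * t) : ℕ) : ZMod (2 ^ 2)) = 0 := by
            rw [ZMod.natCast_eq_zero_iff]
            exact ⟨m * t', by rw [ht']; ring⟩
          calc ((m : ℕ) : ZMod (2 ^ 2)) * ((2 : ℕ) * (t : ℕ))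
              = ((m * (2 * t) : ℕ) : ZMod (2 ^ 2)) := by push_cast; ring
          _ = 0 := hcast
        · -- p odd : p ∣ m
          have hpm : p ∣ m := by
            have h1 : p ∣ m * 2 := hm2 ▸ Dvd.intro _ rfl
            exact (Nat.Coprime.dvd_of_dvd_mul_right
              (Nat.coprime_two_right.mpr hodd) h1)
          obtain ⟨m', hm'⟩ := hpm
          rw [hsum]
          have hcast : ((m * (p * t) : ℕ) : ZMod (p ^ 2)) = 0 := by
            rw [ZMod.natCast_eq_zero_iff]
            exact ⟨m' * t, by rw [hm']; ring⟩
          calc ((m : ℕ) : ZMod (p ^ 2)) * ((p : ℕ) * (t : ℕ))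
              = ((m * (p * t) : ℕ) : ZMod (p ^ 2)) := by push_cast; ring
          _ = 0 := hcast
      rw [hvanish, add_zero, nsmul_eq_mul, mul_one]
    intro hdvd
    have h0 : (T : ZMod (p ^ 2)) = 0 := (ZMod.natCast_eq_zero_iff _ _).mpr hdvd
    rw [hTcast] at h0
    have : p ^ 2 ∣ p := (ZMod.natCast_eq_zero_iff _ _).mp h0
    have := Nat.le_of_dvd hp.pos this
    have := hp.two_le
    nlinarith
  rcases Nat.lt_or_ge s 2 with hs | hs
  · have : T ≤ p := by
      rw [hTs]
      calc p ^ s ≤ p ^ 1 := Nat.pow_le_pow_right hp.pos (by omega)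
      _ = p := pow_one p
    omega
  · exact hnot (hTs ▸ pow_dvd_pow p hs)
end

section
/- Suppose q ≥ 2 and d > 2 are integers and (q^d - 1)/(q - 1) = p^k for a prime p and integer k ≥ 1. Then d divides p - 1. -/
private lemma geo_nat (q m : ℕ) (hq : 1 ≤ q) :
    (∑ i ∈ Finset.range m, q ^ i) * (q - 1) = q ^ m - 1 := by
  have h1 : 1 ≤ q ^ m := Nat.one_le_pow _ _ hq
  zify [hq, h1]
  exact geom_sum_mul (q : ℤ) m

private lemma sum_block (q e n : ℕ) :
    ∑ i ∈ Finset.range (e * n), q ^ i =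
      (∑ i ∈ Finset.range e, q ^ i) * ∑ j ∈ Finset.range n, (q ^ e) ^ j := by
  induction n with
  | zero => simp
  | succ n ih =>
    rw [Nat.mul_succ, Finset.sum_range_add, ih, Finset.sum_range_succ, mul_add]
    congr 1
    rw [Finset.sum_mul]
    apply Finset.sum_congr rfl
    intro i _
    rw [pow_add, ← pow_mul, mul_comm e n, mul_comm (q ^ (n * e)) (q ^ i)]

private lemma sum_mod_two (q m : ℕ) (hq : q % 2 = 1) :
    (∑ i ∈ Finset.range m, q ^ i) % 2 = m % 2 := by
  rw [Finset.sum_nat_mod]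
  have : ∀ i ∈ Finset.range m, q ^ i % 2 = 1 := by
    intro i _
    rw [Nat.pow_mod, hq, one_pow]
    norm_num
  rw [Finset.sum_congr rfl this]
  simp

private lemma two_pow_gt (n : ℕ) (hn : 2 ≤ n) : n + 1 < 2 ^ n := by
  induction n with
  | zero => omega
  | succ n ih =>
    rcases Nat.lt_or_ge n 2 with h2 | h2
    · interval_cases n <;> simp_all
    · have h3 := ih h2
      have : (2:ℕ) ^ (n + 1) = 2 * 2 ^ n := by rw [pow_succ]; ring
      omega

private lemma sum_ge_first_two (q n : ℕ) (hn : 2 ≤ n) :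
    1 + q ≤ ∑ i ∈ Finset.range n, q ^ i := by
  calc 1 + q = ∑ i ∈ Finset.range 2, q ^ i := by
        rw [Finset.sum_range_succ, Finset.sum_range_one, pow_one, pow_zero]
    _ ≤ _ := Finset.sum_le_sum_of_subset (Finset.range_subset_range.mpr hn)

theorem stmt_8 (q d p k : ℕ) (hq : 2 ≤ q) (hd : 2 < d) (hp : p.Prime)
    (hk : 1 ≤ k) (h : ∑ i ∈ Finset.range d, q ^ i = p ^ k) :
    d ∣ p - 1 := by
  haveI : Fact p.Prime := ⟨hp⟩
  have hq1 : 1 ≤ q := by omega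
  have hpS : p ∣ ∑ i ∈ Finset.range d, q ^ i := h ▸ dvd_pow_self p (by omega)
  -- the sum is ≡ 1 mod q
  have hSmodq : (∑ i ∈ Finset.range d, q ^ i) % q = 1 := by
    rw [Finset.sum_nat_mod]
    have hterm : ∀ i ∈ Finset.range d, q ^ i % q = if i = 0 then 1 % q else 0 := by
      intro i _
      rcases Nat.eq_zero_or_pos i with rfl | hi
      · simp
      · rw [if_neg (by omega)]
        exact Nat.dvd_iff_mod_eq_zero.mp (dvd_pow_self q (by omega))
    rw [Finset.sum_congr rfl hterm,
      Finset.sum_ite_eq' (Finset.range d) 0 (fun _ => 1 % q),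
      if_pos (Finset.mem_range.mpr (by omega : 0 < d))]
    have h1q : (1 : ℕ) % q = 1 := Nat.mod_eq_of_lt (by omega)
    rw [h1q, h1q]
  -- p does not divide q
  have hpq : ¬ p ∣ q := by
    intro hdvd
    obtain ⟨t, ht⟩ : ∃ t, (∑ i ∈ Finset.range d, q ^ i) = q * t + 1 := by
      refine ⟨(∑ i ∈ Finset.range d, q ^ i) / q, ?_⟩
      conv_lhs => rw [← Nat.div_add_mod (∑ i ∈ Finset.range d, q ^ i) q]
      rw [hSmodq]
    have h1 : p ∣ 1 := by
      have h2 : p ∣ q * t := Dvd.dvd.mul_right hdvd t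
      have h3 := Nat.dvd_sub hpS h2
      rwa [ht, Nat.add_sub_cancel_left] at h3
    have := Nat.dvd_one.mp h1
    have := hp.two_le
    omega
  -- p is odd
  have hp2 : p ≠ 2 := by
    intro hp2
    subst hp2
    have hqodd : q % 2 = 1 := by
      rcases Nat.mod_two_eq_zero_or_one q with h2 | h2
      · exact absurd (by omega : (2:ℕ) ∣ q) hpq
      · exact h2
    have hdeven : d % 2 = 0 := by
      have h1 := sum_mod_two q d hqodd
      rw [h] at h1
      have h2 : (2:ℕ) ∣ 2 ^ k := dvd_pow_self 2 (by omega)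
      omega
    obtain ⟨m, hm⟩ : ∃ m, d = m * 2 := ⟨d / 2, by omega⟩
    have hm2 : 2 ≤ m := by omega
    have hsplit : (∑ i ∈ Finset.range m, q ^ i) * (1 + q ^ m) = 2 ^ k := by
      rw [← h, hm, sum_block q m 2]
      congr 1
      rw [Finset.sum_range_succ, Finset.sum_range_one, pow_zero, pow_one]
    have hSm_dvd : (∑ i ∈ Finset.range m, q ^ i) ∣ 2 ^ k := ⟨1 + q ^ m, hsplit.symm⟩
    have hQm_dvd : (1 + q ^ m) ∣ 2 ^ k := ⟨∑ i ∈ Finset.range m, q ^ i, by rw [← hsplit]; ring⟩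
    have hSm_ge : 1 + q ≤ ∑ i ∈ Finset.range m, q ^ i := sum_ge_first_two q m hm2
    rcases Nat.even_or_odd m with hmeven | hmodd
    · -- m even : 1 + q^m ≡ 2 mod 4 but 4 ∣ 1 + q^m
      obtain ⟨s, hs⟩ := hmeven
      obtain ⟨c, hck, hc⟩ := (Nat.dvd_prime_pow Nat.prime_two).mp hQm_dvd
      have hqm_ge : 4 ≤ q ^ m := by
        calc (4:ℕ) = 2 ^ 2 := rfl
          _ ≤ q ^ 2 := Nat.pow_le_pow_left hq 2
          _ ≤ q ^ m := Nat.pow_le_pow_right (by omega) (by omega)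
      have hc2 : 2 ≤ c := by
        by_contra hc2
        interval_cases c <;> omega
      have h4 : 4 ∣ 1 + q ^ m := by
        rw [hc]
        calc (4:ℕ) = 2 ^ 2 := rfl
          _ ∣ 2 ^ c := pow_dvd_pow 2 hc2
      have hqs_odd : q ^ s % 2 = 1 := by rw [Nat.pow_mod, hqodd, one_pow]; norm_num
      obtain ⟨u, hu⟩ : ∃ u, q ^ s = 2 * u + 1 := ⟨q ^ s / 2, by omega⟩
      have hqm : q ^ m = (q ^ s) ^ 2 := by rw [← pow_mul]; congr 1; omega
      have hsq : (2 * u + 1) ^ 2 = 4 * (u * u + u) + 1 := by ring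
      rw [hqm, hu, hsq] at h4
      omega
    · -- m odd : S(m) is odd, > 1, divides 2^k
      obtain ⟨a, hak, ha⟩ := (Nat.dvd_prime_pow Nat.prime_two).mp hSm_dvd
      have hSodd : (∑ i ∈ Finset.range m, q ^ i) % 2 = 1 := by
        rw [sum_mod_two q m hqodd, Nat.odd_iff.mp hmodd]
      have ha0 : a = 0 := by
        by_contra ha0
        have : 2 ∣ 2 ^ a := dvd_pow_self 2 ha0
        omega
      rw [ha0, pow_zero] at ha
      omega
  -- main case : p odd
  have hpodd : Odd p := hp.odd_of_ne_two hp2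
  set x : ZMod p := (q : ZMod p) with hx
  have hx0 : x ≠ 0 := fun h0 => hpq ((ZMod.natCast_eq_zero_iff q p).mp h0)
  -- x ^ d = 1
  have hcast : (∑ i ∈ Finset.range d, x ^ i) = 0 := by
    have := congrArg (Nat.cast : ℕ → ZMod p) h
    push_cast at this
    rw [this, ZMod.natCast_self, zero_pow (by omega)]
  have hxd : x ^ d = 1 := by
    have hg := geom_sum_mul x d
    rw [hcast, zero_mul] at hg
    have : x ^ d - 1 = 0 := hg.symm
    linear_combination this
  set e := orderOf x with he
  have hed : e ∣ d := orderOf_dvd_of_pow_eq_one hxd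
  have hep : e ∣ p - 1 :=
    orderOf_dvd_of_pow_eq_one (ZMod.pow_card_sub_one_eq_one hx0)
  have he0 : e ≠ 0 := fun h0 => by
    rw [h0] at hed
    omega
  -- claim : e = d
  have hede : e = d := by
    by_contra hne
    have helt : e < d := lt_of_le_of_ne (Nat.le_of_dvd (by omega) hed) hne
    set n := d / e with hn
    have hden : d = e * n := (Nat.mul_div_cancel' hed).symm
    have hn2 : 2 ≤ n := by
      rcases Nat.lt_or_ge n 2 with h2 | h2
      · interval_cases n <;> omega
      · exact h2
    set Q := q ^ e with hQdef
    have hQ2 : 2 ≤ Q := by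
      calc (2:ℕ) ≤ q := hq
        _ = q ^ 1 := (pow_one q).symm
        _ ≤ Q := Nat.pow_le_pow_right (by omega) (by omega)
    -- p ∣ Q - 1
    have hQ1 : (Q : ZMod p) = 1 := by
      rw [hQdef]
      push_cast
      exact pow_orderOf_eq_one x
    have hpQ1 : p ∣ Q - 1 := by
      have : (Q : ZMod p) = ((1 : ℕ) : ZMod p) := by rw [hQ1]; push_cast; rfl
      have hmod := (ZMod.natCast_eq_natCast_iff Q 1 p).mp this
      exact (Nat.modEq_iff_dvd' (by omega)).mp hmod.symm
    set T := ∑ j ∈ Finset.range n, Q ^ j with hT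
    have hsplit : (∑ i ∈ Finset.range e, q ^ i) * T = p ^ k := by
      rw [← h, hden, sum_block q e n]
    have hT_dvd : T ∣ p ^ k := ⟨∑ i ∈ Finset.range e, q ^ i, by rw [← hsplit]; ring⟩
    have hT_ge : 1 + Q ≤ T := sum_ge_first_two Q n hn2
    obtain ⟨b, hbk, hb⟩ := (Nat.dvd_prime_pow hp).mp hT_dvd
    -- LTE
    have hQn1 : 1 < Q := by omega
    have hnotpQ : ¬ p ∣ Q := fun hdq => hpq (hp.dvd_of_dvd_pow hdq)
    have hlte := padicValNat.pow_sub_pow hpodd hQn1 (by simpa using hpQ1)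
      hnotpQ (by omega : n ≠ 0)
    rw [one_pow] at hlte
    have hgeoQ : T * (Q - 1) = Q ^ n - 1 := geo_nat Q n (by omega)
    have hT0 : T ≠ 0 := by omega
    have hQ10 : Q - 1 ≠ 0 := by omega
    have hmul : padicValNat p (T * (Q - 1)) =
        padicValNat p T + padicValNat p (Q - 1) := padicValNat.mul hT0 hQ10
    rw [hgeoQ, hlte] at hmul
    have hvT : padicValNat p T = padicValNat p n := by omega
    have hvTb : padicValNat p T = b := by rw [hb, padicValNat.prime_pow]
    have hTn : T ∣ n := by
      rw [hb, ← hvTb, hvT]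
      exact pow_padicValNat_dvd
    have hTle : T ≤ n := Nat.le_of_dvd (by omega) hTn
    -- but T ≥ 2^n - 1 > n
    have hTbig : 2 ^ n - 1 ≤ T := by
      have hfact : (∑ j ∈ Finset.range n, 2 ^ j) = 2 ^ n - 1 := by
        have := geo_nat 2 n (by omega)
        simpa using this
      rw [← hfact]
      exact Finset.sum_le_sum fun j _ => Nat.pow_le_pow_left hQ2 j
    have := two_pow_gt n hn2
    omega
  rw [← hede]
  exact hep
end

section
/- If q ≥ 2 is an integer, d ≥ 2, and (q^d - 1)/(q - 1) = 2^k for some integer k ≥ 1, then d = 2 and q = 2^k - 1; in particular q is one less than a power of 2. -/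
lemma aux_geom (q a b : ℕ) :
    ∑ i ∈ Finset.range (a * b), q ^ i
      = (∑ i ∈ Finset.range a, q ^ i) * (∑ j ∈ Finset.range b, (q ^ a) ^ j) := by
  induction b with
  | zero => simp
  | succ n ih =>
    rw [Nat.mul_succ, Finset.sum_range_add, ih, Finset.sum_range_succ, Nat.mul_add]
    congr 1
    simp_rw [pow_add]
    rw [← Finset.mul_sum, pow_mul, mul_comm]

lemma aux_mod (q m : ℕ) (hq : Odd q) :
    (∑ j ∈ Finset.range m, q ^ j) % 2 = m % 2 := by
  rw [Finset.sum_nat_mod]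
  have h1 : ∀ i ∈ Finset.range m, q ^ i % 2 = 1 := fun i _ =>
    Nat.odd_iff.mp (hq.pow)
  rw [Finset.sum_congr rfl h1]
  simp

theorem stmt_9 (q d k : ℕ) (hq : 2 ≤ q) (hd : 2 ≤ d) (hk : 1 ≤ k)
    (h : ∑ i ∈ Finset.range d, q ^ i = 2 ^ k) :
    d = 2 ∧ q = 2 ^ k - 1 := by
  have hkeven : (2 : ℕ) ^ k % 2 = 0 := by
    have : (2:ℕ) ^ k = 2 * 2 ^ (k - 1) := by
      rw [← pow_succ']; congr 1; omega
    omega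
  -- q is odd
  have hqodd : Odd q := by
    rcases Nat.even_or_odd q with he | ho
    · exfalso
      obtain ⟨d', rfl⟩ : ∃ d', d = d' + 1 := ⟨d - 1, by omega⟩
      rw [Finset.sum_range_succ'] at h
      have : (∑ i ∈ Finset.range d', q ^ (i + 1)) % 2 = 0 := by
        rw [Finset.sum_nat_mod]
        have h1 : ∀ i ∈ Finset.range d', q ^ (i+1) % 2 = 0 := by
          intro i _
          have : (2:ℕ) ∣ q ^ (i+1) := dvd_pow he.two_dvd (by omega)
          omega
        rw [Finset.sum_congr rfl h1]
        simp
      simp only [pow_zero] at h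
      omega
    · exact ho
  -- d is even
  have hdeven : d % 2 = 0 := by
    have := aux_mod q d hqodd
    omega
  obtain ⟨m, rfl⟩ : ∃ m, d = 2 * m := ⟨d / 2, by omega⟩
  have hm1 : 1 ≤ m := by omega
  rcases eq_or_lt_of_le hm1 with hm | hm
  · -- m = 1, so d = 2 and 1 + q = 2^k
    subst hm
    rw [aux_geom] at h
    simp [Finset.sum_range_succ] at h
    constructor
    · rfl
    · omega
  · -- m ≥ 2 : contradiction
    exfalso
    have h4 := h
    rw [aux_geom] at h
    set T := ∑ j ∈ Finset.range m, (q ^ 2) ^ j with hT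
    -- T ≥ 1 + q^2
    have hTge : 1 + q ^ 2 ≤ T := by
      have hsub : Finset.range 2 ⊆ Finset.range m := Finset.range_subset_range.mpr (by omega)
      have := Finset.sum_le_sum_of_subset (f := fun j => (q ^ 2) ^ j) hsub
      simpa [Finset.sum_range_succ] using this
    -- T divides 2^k hence is a power of 2
    have hTdvd : T ∣ 2 ^ k := ⟨∑ i ∈ Finset.range 2, q ^ i, by rw [← h]; ring⟩
    obtain ⟨t, ht, hTt⟩ := (Nat.dvd_prime_pow Nat.prime_two).mp hTdvd
    have hq2 : 4 ≤ q ^ 2 := by nlinarith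
    have hTeven : T % 2 = 0 := by
      rcases Nat.eq_zero_or_pos t with h0 | h0
      · subst h0; simp at hTt; omega
      · have : (2:ℕ) ^ t = 2 * 2 ^ (t - 1) := by rw [← pow_succ']; congr 1; omega
        omega
    have hmeven : m % 2 = 0 := by
      have hq2odd : Odd (q ^ 2) := hqodd.pow
      have := aux_mod (q ^ 2) m hq2odd
      omega
    obtain ⟨n, rfl⟩ : ∃ n, m = 2 * n := ⟨m / 2, by omega⟩
    -- now d = 4 * n, factor out 1+q+q^2+q^3 = (1+q)(1+q^2)
    have hd4 : 2 * (2 * n) = 4 * n := by ring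
    rw [hd4, aux_geom] at h4
    have hs4 : ∑ i ∈ Finset.range 4, q ^ i = (1 + q) * (1 + q ^ 2) := by
      simp [Finset.sum_range_succ]; ring
    rw [hs4] at h4
    have hdvd2 : (1 + q ^ 2) ∣ 2 ^ k :=
      ⟨(1 + q) * ∑ j ∈ Finset.range n, (q ^ 4) ^ j, by rw [← h4]; ring⟩
    obtain ⟨s, hs, hss⟩ := (Nat.dvd_prime_pow Nat.prime_two).mp hdvd2
    -- q odd ⇒ q^2 % 4 = 1
    obtain ⟨r, hr⟩ := hqodd
    have hq2mod : q ^ 2 = 4 * (r * r + r) + 1 := by subst hr; ring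
    -- 2^s % 4 = 2 forces s = 1, so q^2 = 1, contradiction
    rcases s with _ | _ | s
    · simp at hss; omega
    · simp at hss; omega
    · have : (2:ℕ) ^ (s + 2) = 4 * 2 ^ s := by ring
      omega
end

section
/- If q + 1 = p^k where q is a prime power, p is prime, and k ≥ 1, then either p = 2 and q is prime (a Mersenne prime), or k = 1 (so p = q + 1 is prime), or q = 8 and p^k = 9. -/
open Finset

lemma odd_dvd_two_pow {d n : ℕ} (hd : Odd d) (h : d ∣ 2 ^ n) : d = 1 :=
  Nat.Coprime.eq_one_of_dvd (hd.coprime_two_right.pow_right n) h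

lemma aux1 {a n k : ℕ} (ha : Odd a) (ha2 : 2 ≤ a) (hn : Odd n)
    (h : a ^ n + 1 = 2 ^ k) : n = 1 := by
  set S : ℤ := ∑ i ∈ range n, (a : ℤ) ^ i * (-1) ^ (n - 1 - i) with hS
  have key : S * ((a : ℤ) - (-1)) = (a : ℤ) ^ n - (-1) ^ n := geom_sum₂_mul _ _ n
  rw [hn.neg_one_pow] at key
  have key' : S * ((a : ℤ) + 1) = (a : ℤ) ^ n + 1 := by linarith [key]
  obtain ⟨m, hm⟩ := ha
  obtain ⟨t, ht⟩ := hn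
  have hcast : ((S : ZMod 2)) = 1 := by
    rw [hS]
    push_cast
    have h1 : ((a : ZMod 2)) = 1 := by
      rw [hm]; push_cast; rw [show ((2:ZMod 2)) = 0 by decide]; ring
    have h2 : ((-1 : ZMod 2)) = 1 := by decide
    rw [Finset.sum_congr rfl (fun i _ => by rw [h1, h2, one_pow, one_pow, one_mul])]
    rw [Finset.sum_const, card_range, nsmul_eq_mul, mul_one, ht]
    push_cast; rw [show ((2:ZMod 2)) = 0 by decide]; ring
  have hSodd : Odd S := by
    rw [← Int.not_even_iff_odd]
    intro he
    have : ((S : ZMod 2)) = 0 := by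
      rw [ZMod.intCast_zmod_eq_zero_iff_dvd]
      exact he.two_dvd
    rw [hcast] at this
    exact one_ne_zero this
  have h2k : (a:ℤ) ^ n + 1 = (2:ℤ) ^ k := by exact_mod_cast h
  have hSdvd : S ∣ (2:ℤ) ^ k := h2k ▸ ⟨(a:ℤ) + 1, key'.symm⟩
  have hna : S.natAbs ∣ 2 ^ k := by
    have := Int.natAbs_dvd_natAbs.mpr hSdvd
    rwa [show ((2:ℤ)^k).natAbs = 2 ^ k by simp [Int.natAbs_pow]] at this
  have hna1 : S.natAbs = 1 := odd_dvd_two_pow (Int.natAbs_odd.mpr hSodd) hna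
  have hSpos : 0 < S := by
    nlinarith [key', pow_pos (show (0:ℤ) < a by positivity) n]
  have hS1 : S = 1 := by omega
  rw [hS1, one_mul] at key'
  have han : a ^ n = a ^ 1 := by
    have : (a:ℤ) ^ n = (a:ℤ) ^ 1 := by rw [pow_one]; linarith
    exact_mod_cast this
  exact Nat.pow_right_injective ha2 han


lemma aux2 {a n k : ℕ} (ha : Odd a) (ha2 : 2 ≤ a) (hn : Odd n) (hn2 : 2 ≤ n)
    (h : a ^ n = 2 ^ k + 1) : False := by
  set S : ℤ := ∑ i ∈ range n, (a : ℤ) ^ i with hS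
  have key : S * ((a : ℤ) - 1) = (a : ℤ) ^ n - 1 := geom_sum_mul _ n
  obtain ⟨m, hm⟩ := ha
  obtain ⟨t, ht⟩ := hn
  have hcast : ((S : ZMod 2)) = 1 := by
    rw [hS]
    push_cast
    have h1 : ((a : ZMod 2)) = 1 := by
      rw [hm]; push_cast; rw [show ((2:ZMod 2)) = 0 by decide]; ring
    rw [Finset.sum_congr rfl (fun i _ => by rw [h1, one_pow])]
    rw [Finset.sum_const, card_range, nsmul_eq_mul, mul_one, ht]
    push_cast; rw [show ((2:ZMod 2)) = 0 by decide]; ring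
  have hSodd : Odd S := by
    rw [← Int.not_even_iff_odd]
    intro he
    have : ((S : ZMod 2)) = 0 := by
      rw [ZMod.intCast_zmod_eq_zero_iff_dvd]
      exact he.two_dvd
    rw [hcast] at this
    exact one_ne_zero this
  have h2k : (a:ℤ) ^ n - 1 = (2:ℤ) ^ k := by
    have : (a:ℤ) ^ n = (2:ℤ) ^ k + 1 := by exact_mod_cast h
    linarith
  have hSdvd : S ∣ (2:ℤ) ^ k := h2k ▸ ⟨(a:ℤ) - 1, key.symm⟩
  have hna : S.natAbs ∣ 2 ^ k := by
    have := Int.natAbs_dvd_natAbs.mpr hSdvd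
    rwa [show ((2:ℤ)^k).natAbs = 2 ^ k by simp [Int.natAbs_pow]] at this
  have hna1 : S.natAbs = 1 := odd_dvd_two_pow (Int.natAbs_odd.mpr hSodd) hna
  have hSge : (1 + (a:ℤ)) ≤ S := by
    rw [hS]
    have : ∑ i ∈ range 2, (a : ℤ) ^ i ≤ ∑ i ∈ range n, (a : ℤ) ^ i := by
      apply Finset.sum_le_sum_of_subset_of_nonneg
      · exact Finset.range_subset_range.mpr hn2
      · intro i _ _; positivity
    simpa [Finset.sum_range_succ] using this
  omega

theorem stmt_10 (q r l p k : ℕ) (hr : r.Prime) (hl : 1 ≤ l) (hqrl : q = r ^ l)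
    (hp : p.Prime) (hk : 1 ≤ k) (h : q + 1 = p ^ k) :
    (p = 2 ∧ q.Prime) ∨ k = 1 ∨ (q = 8 ∧ p ^ k = 9) := by
  rcases eq_or_lt_of_le hk with hk1 | hk2
  · exact Or.inr (Or.inl hk1.symm)
  rcases Nat.even_or_odd r with hre | hro
  · -- r = 2, q = 2^l, p odd
    have hr2 : r = 2 := (Nat.Prime.even_iff hr).mp hre
    subst hr2
    have hpodd : Odd p := by
      rcases hp.eq_two_or_odd' with h2 | ho
      · subst h2
        -- 2^l + 1 = 2^k impossible: LHS odd ≥ 3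
        exfalso
        have d1 : (2:ℕ) ∣ 2 ^ l := dvd_pow_self 2 (by omega)
        have d2 : (2:ℕ) ∣ 2 ^ k := dvd_pow_self 2 (by omega)
        rw [hqrl] at h
        omega
      · exact ho
    rcases Nat.even_or_odd k with hke | hko
    · -- k even: q = 8 case
      obtain ⟨m, hm⟩ := hke
      have hm1 : 1 ≤ m := by omega
      have hfac : (p ^ m - 1) * (p ^ m + 1) = 2 ^ l := by
        have hpm1 : 1 ≤ p ^ m := Nat.one_le_pow _ _ hp.pos
        have : p ^ k = p ^ m * p ^ m := by rw [hm, ← pow_add]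
        rw [hqrl] at h
        nlinarith [Nat.sub_add_cancel hpm1]
      have hd1 : p ^ m - 1 ∣ 2 ^ l := ⟨_, hfac.symm⟩
      have hd2 : p ^ m + 1 ∣ 2 ^ l := Dvd.intro_left _ hfac
      obtain ⟨i, hi, hie⟩ := (Nat.dvd_prime_pow Nat.prime_two).mp hd1
      obtain ⟨j, hj, hje⟩ := (Nat.dvd_prime_pow Nat.prime_two).mp hd2
      have hpm1 : 1 ≤ p ^ m := Nat.one_le_pow _ _ hp.pos
      have hpmodd : Odd (p ^ m) := hpodd.pow
      obtain ⟨cc, hcc⟩ := hpmodd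
      generalize hP : p ^ m = P at hie hje hpm1 hcc hfac
      have hijlt : i < j := by
        have hlt : (2:ℕ) ^ i < 2 ^ j := by rw [← hie, ← hje]; omega
        exact (Nat.pow_lt_pow_iff_right (by norm_num)).mp hlt
      obtain ⟨e, he⟩ := pow_dvd_pow 2 hijlt.le
      have heq : 2 ^ i + 2 = 2 ^ j := by rw [← hie, ← hje]; omega
      generalize hX : (2:ℕ) ^ i = X at hie heq he
      generalize hY : (2:ℕ) ^ j = Y at hje heq he
      have hXdvd : X ∣ 2 := by
        have h1 : X ∣ X + 2 := ⟨e, by rw [heq, he]⟩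
        exact (Nat.dvd_add_right dvd_rfl).mp h1
      have hX12 := (Nat.dvd_prime Nat.prime_two).mp hXdvd
      have hpm3 : P = 3 := by omega
      have hp3 : p = 3 ∧ m = 1 := by
        rcases Nat.eq_or_lt_of_le hm1 with h1 | h2
        · rw [← h1, pow_one] at hP
          exact ⟨by omega, h1.symm⟩
        · exfalso
          have h22 : p ^ 2 ≤ p ^ m := Nat.pow_le_pow_right hp.pos (by omega)
          rw [hP] at h22
          nlinarith [hp.two_le]
      obtain ⟨hp3', hm1'⟩ := hp3
      have hk2' : k = 2 := by omega
      right; right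
      constructor
      · rw [hqrl]
        have : p ^ k = 9 := by rw [hp3', hk2']; norm_num
        omega
      · rw [hp3', hk2']; norm_num
    · -- k odd ≥ 3: contradiction via aux2
      exfalso
      rw [hqrl] at h
      exact aux2 hpodd hp.two_le hko (by omega) h.symm
  · -- r odd: p = 2
    have hq : q + 1 = p ^ k := h
    have hqodd : Odd q := by rw [hqrl]; exact hro.pow
    have hp2 : p = 2 := by
      have : Even (p ^ k) := by
        rw [← h]
        obtain ⟨c, hc⟩ := hqodd
        exact ⟨c + 1, by omega⟩
      
      rcases hp.eq_two_or_odd' with h2 | ho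
      · exact h2
      · exfalso; exact (Nat.not_even_iff_odd.mpr ho.pow) this
    subst hp2
    rcases Nat.even_or_odd l with hle | hlo
    · -- l even, k ≥ 2: contradiction mod 4
      exfalso
      obtain ⟨m, hm⟩ := hle
      have hm1 : 1 ≤ m := by omega
      obtain ⟨c, hc⟩ := hro.pow (n := m)
      have hsq : q = (r ^ m) * (r ^ m) := by rw [hqrl, hm, ← pow_add]
      have h4 : (4:ℕ) ∣ 2 ^ k := by
        calc (4:ℕ) = 2 ^ 2 := by norm_num
        _ ∣ 2 ^ k := pow_dvd_pow 2 hk2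
      obtain ⟨d, hd⟩ := h4
      rw [hsq, hc, hd] at h
      have hr2 : (2 * c + 1) * (2 * c + 1) + 1 = 4 * (c * c + c) + 2 := by ring
      omega
    · -- l odd: aux1 gives l = 1, q = r prime
      rw [hqrl] at h
      have hl1 : l = 1 := aux1 hro hr.two_le hlo h
      left
      exact ⟨rfl, by rw [hqrl, hl1, pow_one]; exact hr⟩
end

section
/- If d > 2 and (q^d - 1)/(q - 1) = p^k for integers q ≥ 2, k ≥ 1 and prime p, then p does not divide gcd(d, q - 1). -/
lemma geom_mul (q a m : ℕ) :
    ∑ i ∈ Finset.range (a * m), q ^ i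
      = (∑ i ∈ Finset.range a, q ^ i) * ∑ j ∈ Finset.range m, (q ^ a) ^ j := by
  induction m with
  | zero => simp
  | succ n ih =>
    rw [Finset.sum_range_succ, Nat.mul_succ, Finset.sum_range_add, ih, mul_add]
    congr 1
    rw [Finset.sum_mul, ← pow_mul]
    apply Finset.sum_congr rfl
    intro i _
    rw [pow_add, mul_comm]

lemma binom_sq_zero {R : Type*} [CommRing R] (x : R) (hx : x ^ 2 = 0) (i : ℕ) :
    (1 + x) ^ i = 1 + (i : R) * x := by
  induction i with
  | zero => simp
  | succ n ih =>
    rw [pow_succ, ih]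
    push_cast
    ring_nf
    rw [hx]
    ring

lemma key_odd (p t : ℕ) (hp : p.Prime) (hodd : Odd p) :
    ¬ p ^ 2 ∣ ∑ i ∈ Finset.range p, (t * p + 1) ^ i := by
  intro hdvd
  set R := ZMod (p ^ 2)
  have hp2 : ((p : R)) ^ 2 = 0 := by
    rw [← Nat.cast_pow, ZMod.natCast_self]
  have hx : ((t : R) * p) ^ 2 = 0 := by
    rw [mul_pow, hp2, mul_zero]
  obtain ⟨c, hc⟩ := hodd
  have hsum : ∑ i ∈ Finset.range p, i = p * c := by
    have h2 : (∑ i ∈ Finset.range p, i) * 2 = p * c * 2 := by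
      rw [Finset.sum_range_id_mul_two]
      have hpm : p - 1 = 2 * c := by omega
      rw [hpm]; ring
    omega
  have hA : ((∑ i ∈ Finset.range p, (t * p + 1) ^ i : ℕ) : R) = (p : R) := by
    rw [Nat.cast_sum]
    push_cast
    have : ∀ i ∈ Finset.range p, ((t : R) * p + 1) ^ i = 1 + (i : R) * ((t : R) * p) := by
      intro i _
      rw [add_comm ((t : R) * (p : R)) 1]
      exact binom_sq_zero _ hx i
    rw [Finset.sum_congr rfl this, Finset.sum_add_distrib, Finset.sum_const,
      ← Finset.sum_mul, Finset.card_range]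
    have h2 : (∑ i ∈ Finset.range p, (i : R)) = ((p * c : ℕ) : R) := by
      rw [← hsum, Nat.cast_sum]
    rw [h2]
    rw [Nat.cast_mul]
    have : (p : R) * c * ((t : R) * p) = (c : R) * t * ((p:R))^2 := by ring
    rw [this, hp2]
    simp
  have hzero : ((∑ i ∈ Finset.range p, (t * p + 1) ^ i : ℕ) : R) = 0 := by
    exact (ZMod.natCast_eq_zero_iff _ _).mpr hdvd
  rw [hA] at hzero
  have : p ^ 2 ∣ p := (ZMod.natCast_eq_zero_iff _ _).mp hzero
  have hle : p ^ 2 ≤ p := Nat.le_of_dvd hp.pos this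
  nlinarith [hp.two_le]

theorem stmt_15 (q d p k : ℕ) (hq : 2 ≤ q) (hd : 2 < d) (hp : p.Prime)
    (hk : 1 ≤ k) (h : ∑ i ∈ Finset.range d, q ^ i = p ^ k) :
    ¬ p ∣ Nat.gcd d (q - 1) := by
  intro hdvd
  have hpd : p ∣ d := hdvd.trans (Nat.gcd_dvd_left _ _)
  have hpq : p ∣ q - 1 := hdvd.trans (Nat.gcd_dvd_right _ _)
  by_cases hp2 : p = 2
  · subst hp2
    obtain ⟨t, ht⟩ := hpq
    have hqodd : q % 2 = 1 := by omega
    obtain ⟨m, hm⟩ := hpd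
    have hm2 : 2 ≤ m := by omega
    have hfac := geom_mul q 2 m
    rw [← hm, h] at hfac
    have hB : (∑ j ∈ Finset.range m, (q ^ 2) ^ j) ∣ 2 ^ k :=
      ⟨∑ i ∈ Finset.range 2, q ^ i, by rw [hfac, mul_comm]⟩
    have hq4 : 4 ≤ q ^ 2 := by nlinarith
    have hBge : 1 + q ^ 2 ≤ ∑ j ∈ Finset.range m, (q ^ 2) ^ j := by
      have hsub : Finset.range 2 ⊆ Finset.range m := Finset.range_subset_range.mpr hm2
      have := Finset.sum_le_sum_of_subset (f := fun j => (q ^ 2) ^ j) hsub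
      simpa [Finset.sum_range_succ] using this
    obtain ⟨j, hjk, hBj⟩ := (Nat.dvd_prime_pow Nat.prime_two).mp hB
    have hj1 : 1 ≤ j := by
      rcases Nat.eq_zero_or_pos j with h0 | h1
      · subst h0; rw [pow_zero] at hBj; omega
      · exact h1
    have hBeven : 2 ∣ ∑ j ∈ Finset.range m, (q ^ 2) ^ j := by
      rw [hBj]; exact dvd_pow_self 2 (by omega)
    have hmod : (∑ j ∈ Finset.range m, (q ^ 2) ^ j) % 2 = m % 2 := by
      rw [Finset.sum_nat_mod]
      have : ∀ j ∈ Finset.range m, (q ^ 2) ^ j % 2 = 1 := by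
        intro j _
        have : Odd ((q ^ 2) ^ j) := by
          apply Odd.pow
          apply Odd.pow
          exact Nat.odd_iff.mpr hqodd
        exact Nat.odd_iff.mp this
      rw [Finset.sum_congr rfl this]
      simp
    have hmeven : 2 ∣ m := by omega
    obtain ⟨n, hn⟩ := hmeven
    have hd4 : d = 4 * n := by omega
    have hfac4 := geom_mul q 4 n
    rw [← hd4, h] at hfac4
    have hA4 : (∑ i ∈ Finset.range 4, q ^ i) ∣ 2 ^ k := ⟨_, hfac4⟩
    have hsplit : (∑ i ∈ Finset.range 4, q ^ i) = (q ^ 2 + 1) * (q + 1) := by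
      simp [Finset.sum_range_succ]
      ring
    have hq2dvd : (q ^ 2 + 1) ∣ 2 ^ k := dvd_trans ⟨q + 1, hsplit⟩ hA4
    obtain ⟨i, hik, hi⟩ := (Nat.dvd_prime_pow Nat.prime_two).mp hq2dvd
    have hi3 : 2 ≤ i := by
      by_contra hlt
      have : 2 ^ i ≤ 2 ^ 1 := Nat.pow_le_pow_right (by norm_num) (by omega)
      omega
    have h4 : 4 ∣ q ^ 2 + 1 := by
      rw [hi]
      have : (2 : ℕ) ^ 2 ∣ 2 ^ i := pow_dvd_pow 2 hi3
      simpa using this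
    obtain ⟨s, hs⟩ : ∃ s, q = 2 * s + 1 := ⟨q / 2, by omega⟩
    have hq2e : q ^ 2 + 1 = 4 * (s * s + s) + 2 := by rw [hs]; ring
    omega
  · have hodd : Odd p := hp.odd_of_ne_two hp2
    obtain ⟨t, ht⟩ := hpq
    have hq_eq : q = t * p + 1 := by
      have h2 := hp.two_le
      have ht' : q - 1 = t * p := by rw [ht, mul_comm]
      omega
    obtain ⟨m, hm⟩ := hpd
    have hfac := geom_mul q p m
    rw [← hm, h] at hfac
    have hA : (∑ i ∈ Finset.range p, q ^ i) ∣ p ^ k := ⟨_, hfac⟩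
    obtain ⟨j, hjk, hj⟩ := (Nat.dvd_prime_pow hp).mp hA
    have hgt : p < ∑ i ∈ Finset.range p, q ^ i := by
      calc p = ∑ _i ∈ Finset.range p, 1 := by simp
        _ < ∑ i ∈ Finset.range p, q ^ i := by
            apply Finset.sum_lt_sum
            · intro i _; exact Nat.one_le_pow _ _ (by omega)
            · exact ⟨1, Finset.mem_range.mpr hp.one_lt, by simpa using (by omega : 1 < q)⟩
    rw [hj] at hgt
    have hj2 : 2 ≤ j := by
      have h1 : p ^ 1 < p ^ j := by simpa using hgt
      have := (Nat.pow_lt_pow_iff_right hp.one_lt).mp h1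
      omega
    have hp2dvd : p ^ 2 ∣ ∑ i ∈ Finset.range p, q ^ i := by
      rw [hj]; exact pow_dvd_pow p hj2
    rw [hq_eq] at hp2dvd
    exact key_odd p t hp hodd hp2dvd
end

section
/- Let G be a finite group acting transitively and imprimitively on a set of cardinality p^2 for a prime p, or primitively on a set of cardinality p or p^2 where G is a p-group. Then if G is a p-group acting transitively and faithfully on a set of cardinality p^2, G contains a subgroup acting regularly. -/
open MulAction Subgroup

theorem stmt_19 {G : Type*} [Group G] [Finite G] (p : ℕ) (hp : p.Prime)
    (hG : IsPGroup p G) {Ω : Type*} [Fintype Ω] [MulAction G Ω]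
    [FaithfulSMul G Ω] [MulAction.IsPretransitive G Ω]
    (hΩ : Fintype.card Ω = p ^ 2) :
    ∃ R : Subgroup G, MulAction.IsPretransitive R Ω ∧
      ∀ x : Ω, MulAction.stabilizer R x = ⊥ := by
  classical
  have hp1 : 1 < p := hp.one_lt
  have hΩpos : 0 < Fintype.card Ω := by
    rw [hΩ]; positivity
  have : Nonempty Ω := Fintype.card_pos_iff.mp hΩpos
  obtain ⟨x₀⟩ := this
  -- central elements fixing a point are trivial
  have hfree : ∀ u ∈ Subgroup.center G, ∀ x : Ω, u • x = x → u = 1 := by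
    intro u hu x hx
    apply eq_of_smul_eq_smul (α := Ω)
    intro y
    obtain ⟨h, rfl⟩ := MulAction.exists_smul_eq G x y
    rw [one_smul, ← mul_smul, (Subgroup.mem_center_iff.mp hu h).symm, mul_smul, hx]
  -- G is nontrivial
  have hGnt : Nontrivial G := by
    by_contra hcon
    rw [not_nontrivial_iff_subsingleton] at hcon
    have : Subsingleton Ω := by
      constructor
      intro a b
      obtain ⟨g, rfl⟩ := MulAction.exists_smul_eq G a b
      rw [Subsingleton.elim g 1, one_smul]
    have := Fintype.card_le_one_iff_subsingleton.mpr this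
    nlinarith
  -- find a central element of order p
  haveI : Fact p.Prime := ⟨hp⟩
  obtain ⟨z, hzc, hzord⟩ : ∃ z : G, z ∈ Subgroup.center G ∧ orderOf z = p := by
    have hZnt : Nontrivial (Subgroup.center G) := hG.center_nontrivial
    have hZp : IsPGroup p (Subgroup.center G) := hG.to_subgroup _
    obtain ⟨k, hk⟩ := IsPGroup.iff_card.mp hZp
    have hk1 : k ≠ 0 := by
      rintro rfl
      rw [pow_zero] at hk
      have h2 : 1 < Nat.card (Subgroup.center G) := Finite.one_lt_card_iff_nontrivial.mpr hZnt
      omega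
    have hdvd : p ∣ Nat.card (Subgroup.center G) := by
      rw [hk]; exact dvd_pow_self p hk1
    obtain ⟨z', hz'⟩ := exists_prime_orderOf_dvd_card' p hdvd
    exact ⟨(z' : G), z'.2, by rw [Subgroup.orderOf_coe]; exact hz'⟩
  set Z₀ : Subgroup G := Subgroup.zpowers z with hZ₀
  have hZ₀c : Z₀ ≤ Subgroup.center G := Subgroup.zpowers_le.mpr hzc
  have hZ₀card : Nat.card Z₀ = p := by rw [Nat.card_zpowers, hzord]
  -- the quotient of Ω by Z₀-orbits
  set Ω' := MulAction.orbitRel.Quotient Z₀ Ω with hΩ'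
  have hcompat : ∀ (g : G) (a b : Ω), (MulAction.orbitRel Z₀ Ω).r a b →
      (MulAction.orbitRel Z₀ Ω).r (g • a) (g • b) := by
    intro g a b hab
    have hab' : a ∈ MulAction.orbit Z₀ b := hab
    show (g • a) ∈ MulAction.orbit Z₀ (g • b)
    rw [MulAction.mem_orbit_iff] at hab' ⊢
    obtain ⟨u, hu⟩ := hab'
    refine ⟨u, ?_⟩
    have hcz : (u : G) * g = g * (u : G) :=
      (Subgroup.mem_center_iff.mp (hZ₀c u.2) g).symm
    rw [Subgroup.smul_def] at hu ⊢
    rw [← mul_smul, hcz, mul_smul, hu]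
  let φ : G →* Equiv.Perm Ω' :=
    { toFun := fun g =>
        { toFun := Quotient.map' (g • ·) (hcompat g)
          invFun := Quotient.map' (g⁻¹ • ·) (hcompat g⁻¹)
          left_inv := fun c => Quotient.inductionOn' c fun x => by
            simp [Quotient.map'_mk'']
          right_inv := fun c => Quotient.inductionOn' c fun x => by
            simp [Quotient.map'_mk''] }
      map_one' := by
        ext c
        induction c using Quotient.inductionOn' with
        | h x => simp [Quotient.map'_mk'']
      map_mul' := fun a b => by
        ext c
        induction c using Quotient.inductionOn' with
        | h x => simp [Quotient.map'_mk'', mul_smul] }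
  have hφmk : ∀ (g : G) (x : Ω), φ g (Quotient.mk'' x) = Quotient.mk'' (g • x) :=
    fun g x => rfl
  -- stabilizers in Z₀ are trivial
  have hstabZ : ∀ b : Ω, MulAction.stabilizer Z₀ b = ⊥ := by
    intro b
    rw [eq_bot_iff]
    intro u hu
    have hu1 : (u : G) = 1 := hfree u (hZ₀c u.2) b hu
    exact Subgroup.mem_bot.mpr (Subtype.ext hu1)
  haveI : Fintype Ω' := Fintype.ofFinite _
  haveI : ∀ ω : Ω', Fintype (ω.orbit) := fun ω => Fintype.ofFinite _
  -- each orbit has cardinality p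
  have horb : ∀ ω : Ω', Nat.card ω.orbit = p := by
    intro ω
    rw [MulAction.orbitRel.Quotient.orbit_eq_orbit_out ω Quotient.out_eq']
    rw [Nat.card_congr (MulAction.orbitEquivQuotientStabilizer Z₀ (Quotient.out ω))]
    rw [hstabZ]
    rw [Nat.card_congr (QuotientGroup.quotientBot (G := Z₀)).toEquiv]
    exact hZ₀card
  -- the quotient has cardinality p
  have hΩ'card : Fintype.card Ω' = p := by
    have hsum : Fintype.card Ω = ∑ ω : Ω', Fintype.card ω.orbit :=
      (Fintype.card_congr (MulAction.selfEquivSigmaOrbits' Z₀ Ω)).trans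
        (Fintype.card_sigma)
    have hsum2 : Fintype.card Ω = Fintype.card Ω' * p := by
      rw [hsum]
      rw [Finset.sum_congr rfl (fun ω _ => show Fintype.card ω.orbit = p by
        rw [← Nat.card_eq_fintype_card, horb ω])]
      rw [Finset.sum_const, smul_eq_mul, Finset.card_univ]
    rw [hΩ, pow_two] at hsum2
    exact Nat.eq_of_mul_eq_mul_right (by omega) hsum2.symm
  -- the image of G in Perm Ω' has cardinality dividing p
  have hPpgroup : IsPGroup p φ.range := hG.of_surjective φ.rangeRestrict φ.rangeRestrict_surjective
  have hPcard : Nat.card φ.range ∣ p := by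
    obtain ⟨n, hn⟩ := IsPGroup.iff_card.mp hPpgroup
    have hdvd : Nat.card φ.range ∣ Nat.card (Equiv.Perm Ω') := Subgroup.card_subgroup_dvd_card _
    have hpermcard : Nat.card (Equiv.Perm Ω') = p.factorial := by
      rw [Nat.card_eq_fintype_card, ← hΩ'card]
      exact Fintype.card_perm
    rw [hpermcard] at hdvd
    rw [hn] at hdvd ⊢
    have hnle : n ≤ 1 := by
      by_contra hcon
      have h2 : p ^ 2 ∣ p.factorial := dvd_trans (pow_dvd_pow p (by omega)) hdvd
      rw [← Nat.mul_factorial_pred hp.ne_zero, pow_two] at h2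
      have h3 : p ∣ (p - 1).factorial :=
        (Nat.mul_dvd_mul_iff_left hp.pos).mp h2
      have := (Nat.Prime.dvd_factorial hp).mp h3
      omega
    exact dvd_trans (pow_dvd_pow p hnle) (by rw [pow_one])
  -- transitivity on the quotient
  have htransΩ' : ∀ c d : Ω', ∃ h : G, φ h c = d := by
    intro c d
    induction c using Quotient.inductionOn' with
    | h x =>
    induction d using Quotient.inductionOn' with
    | h y =>
    obtain ⟨h, rfl⟩ := MulAction.exists_smul_eq G x y
    exact ⟨h, hφmk h x⟩
  -- φ is nontrivial
  obtain ⟨g, hg⟩ : ∃ g : G, φ g ≠ 1 := by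
    by_contra hcon
    push_neg at hcon
    haveI : Nontrivial Ω' := Fintype.one_lt_card_iff_nontrivial.mp (by rw [hΩ'card]; omega)
    obtain ⟨c, d, hcd⟩ := exists_pair_ne Ω'
    obtain ⟨h, hh⟩ := htransΩ' c d
    rw [hcon h, Equiv.Perm.one_apply] at hh
    exact hcd hh
  -- φ.range is generated by φ g
  have hrange : ∀ h : G, ∃ k : ℤ, φ h = (φ g) ^ k := by
    have hgord : orderOf (φ g) = p := by
      have h1 : orderOf (φ g) ∣ Nat.card φ.range := by
        have : φ g ∈ φ.range := ⟨g, rfl⟩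
        rw [← Nat.card_zpowers]
        exact Subgroup.card_dvd_of_le (Subgroup.zpowers_le.mpr this)
      have h2 : orderOf (φ g) ∣ p := h1.trans hPcard
      rcases (Nat.Prime.eq_one_or_self_of_dvd hp _ h2) with h | h
      · exact absurd (orderOf_eq_one_iff.mp h) hg
      · exact h
    have hcard_range : Nat.card φ.range = p := by
      rcases (Nat.Prime.eq_one_or_self_of_dvd hp _ hPcard) with h | h
      · exfalso
        have hm : φ g ∈ φ.range := ⟨g, rfl⟩
        have h1 : orderOf (φ g) ∣ Nat.card φ.range := by
          rw [← Nat.card_zpowers]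
          exact Subgroup.card_dvd_of_le (Subgroup.zpowers_le.mpr hm)
        rw [h, Nat.dvd_one, hgord] at h1
        omega
      · exact h
    intro h
    have hmem : φ h ∈ Subgroup.zpowers (φ g) := by
      have hle : Subgroup.zpowers (φ g) ≤ φ.range := Subgroup.zpowers_le.mpr ⟨g, rfl⟩
      have hcz : Nat.card (Subgroup.zpowers (φ g)) = Nat.card φ.range := by
        rw [Nat.card_zpowers, hgord, hcard_range]
      have heq : Subgroup.zpowers (φ g) = φ.range :=
        Subgroup.eq_of_le_of_card_ge hle (le_of_eq hcz.symm)
      rw [heq]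
      exact ⟨h, rfl⟩
    obtain ⟨k, hk⟩ := Subgroup.mem_zpowers_iff.mp hmem
    exact ⟨k, hk.symm⟩
  -- the regular subgroup
  set R : Subgroup G := Z₀ ⊔ Subgroup.zpowers g with hR
  -- R is abelian
  have hgcomm : ∀ b ∈ R, b * g = g * b := by
    have hle : R ≤ Subgroup.centralizer {g} := by
      rw [hR]
      apply sup_le
      · intro b hb
        exact Subgroup.mem_centralizer_iff.mpr fun h hh => by
          rw [Set.mem_singleton_iff] at hh
          rw [hh]
          exact (Subgroup.mem_center_iff.mp (hZ₀c hb) g)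
      · intro b hb
        obtain ⟨k, rfl⟩ := Subgroup.mem_zpowers_iff.mp hb
        exact Subgroup.mem_centralizer_iff.mpr fun h hh => by
          rw [Set.mem_singleton_iff] at hh
          rw [hh]
          exact ((Commute.refl g).zpow_right k).eq
    intro b hb
    exact (Subgroup.mem_centralizer_iff.mp (hle hb) g rfl).symm
  have hcomm : ∀ a ∈ R, ∀ b ∈ R, a * b = b * a := by
    have hle : R ≤ Subgroup.centralizer R := by
      rw [hR]
      apply sup_le
      · intro b hb
        exact Subgroup.mem_centralizer_iff.mpr fun h _ =>
          (Subgroup.mem_center_iff.mp (hZ₀c hb) h)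
      · intro b hb
        obtain ⟨k, rfl⟩ := Subgroup.mem_zpowers_iff.mp hb
        refine Subgroup.mem_centralizer_iff.mpr fun h hh => ?_
        have h1 : h * g = g * h := hgcomm h hh
        exact ((Commute.zpow_right (by exact h1) k)).eq
    intro a ha b hb
    exact Subgroup.mem_centralizer_iff.mp (hle hb) a ha
  -- R acts transitively
  have htrans : ∀ x y : Ω, ∃ r ∈ R, r • x = y := by
    intro x y
    obtain ⟨h, hh⟩ := MulAction.exists_smul_eq G x y
    obtain ⟨k, hk⟩ := hrange h
    have hquot : (Quotient.mk'' (g ^ k • x) : Ω') = Quotient.mk'' y := by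
      have e1 : φ (g ^ k) (Quotient.mk'' x) = Quotient.mk'' (g ^ k • x) := hφmk _ x
      rw [← e1, map_zpow, ← hk, hφmk, hh]
    have hrel : (g ^ k • x) ∈ MulAction.orbit Z₀ y := Quotient.exact' hquot
    obtain ⟨u, hu⟩ := MulAction.mem_orbit_iff.mp hrel
    refine ⟨(u : G)⁻¹ * g ^ k, ?_, ?_⟩
    · exact Subgroup.mul_mem _ (Subgroup.mem_sup_left (Subgroup.inv_mem _ u.2))
        (Subgroup.mem_sup_right (Subgroup.zpow_mem _ (Subgroup.mem_zpowers g) k))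
    · rw [mul_smul]
      rw [Subgroup.smul_def] at hu
      rw [← hu, ← mul_smul]
      simp
  refine ⟨R, ⟨fun x y => ?_⟩, fun x => ?_⟩
  · obtain ⟨r, hr, hrx⟩ := htrans x y
    exact ⟨⟨r, hr⟩, hrx⟩
  · rw [eq_bot_iff]
    intro r hr
    have hrx : (r : G) • x = x := hr
    have : (r : G) = 1 := by
      apply eq_of_smul_eq_smul (α := Ω)
      intro y
      obtain ⟨s, hs, hsx⟩ := htrans x y
      rw [one_smul, ← hsx, ← mul_smul, hcomm _ r.2 _ hs, mul_smul, hrx]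
    exact Subgroup.mem_bot.mpr (Subtype.ext this)
end
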